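/- Let 0 < ϱ₋ < ϱ₊, p₋, p₊ > 0, ϱ₁ > ϱ₊ and v₋ ∈ ℝ; set R := ϱ₋ − ϱ₊ < 0 and, for u > 0, v₊ := v₋ − u, A := ϱ₋v₋ − ϱ₊v₊, B := ϱ₋ϱ₊u² − (ϱ₊ − ϱ₋)(p₊ − p₋), μ₀ := A/R − (1/R)·√(B(ϱ₁−ϱ₊)/(ϱ₁−ϱ₋)), μ₁ := A/R − (1/R)·√(B(ϱ₁−ϱ₋)/(ϱ₁−ϱ₊)), and (whenever v₋ ≠ μ₀ and μ₁ ≠ v₊) Y := ϱ₁ϱ₊·(v₋+μ₀)/(v₋−μ₀) + ϱ₁ϱ₋·(μ₁+v₊)/(μ₁−v₊). Then there exists u₀ > 0 such that for all u ≥ u₀ the quantity Y is well defined and satisfies Y < 0 and Y + ϱ₁R < 0; moreover Y converges, as u → ∞, to ϱ₁R·(1 + 2/(√(ϱ₊(ϱ₁−ϱ₋)/(ϱ₋(ϱ₁−ϱ₊))) − 1)). -/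

import Mathlib

noncomputable section

/-- `B = ϱ₋ϱ₊u² − (ϱ₊ − ϱ₋)(p₊ − p₋)`. -/
def Bu (ϱm ϱp pm pp u : ℝ) : ℝ := ϱm * ϱp * u ^ 2 - (ϱp - ϱm) * (pp - pm)

/-- The left interface speed `μ₀ = A/R − (1/R)·√(B(ϱ₁−ϱ₊)/(ϱ₁−ϱ₋))`,
with `v₋` fixed and `v₊ = v₋ − u`. -/
def mu0u (ϱm ϱp pm pp ϱ1 vm u : ℝ) : ℝ :=
  (ϱm * vm - ϱp * (vm - u)) / (ϱm - ϱp) -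
    (1 / (ϱm - ϱp)) * Real.sqrt (Bu ϱm ϱp pm pp u * ((ϱ1 - ϱp) / (ϱ1 - ϱm)))

/-- The right interface speed `μ₁ = A/R − (1/R)·√(B(ϱ₁−ϱ₋)/(ϱ₁−ϱ₊))`,
with `v₋` fixed and `v₊ = v₋ − u`. -/
def mu1u (ϱm ϱp pm pp ϱ1 vm u : ℝ) : ℝ :=
  (ϱm * vm - ϱp * (vm - u)) / (ϱm - ϱp) -
    (1 / (ϱm - ϱp)) * Real.sqrt (Bu ϱm ϱp pm pp u * ((ϱ1 - ϱm) / (ϱ1 - ϱp)))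

/-- `Y = ϱ₁ϱ₊·(v₋+μ₀)/(v₋−μ₀) + ϱ₁ϱ₋·(μ₁+v₊)/(μ₁−v₊)`. -/
def Yu (ϱm ϱp pm pp ϱ1 vm u : ℝ) : ℝ :=
  ϱ1 * ϱp * ((vm + mu0u ϱm ϱp pm pp ϱ1 vm u) / (vm - mu0u ϱm ϱp pm pp ϱ1 vm u)) +
  ϱ1 * ϱm * ((mu1u ϱm ϱp pm pp ϱ1 vm u + (vm - u)) /
    (mu1u ϱm ϱp pm pp ϱ1 vm u - (vm - u)))

/-- `X = ϱ₊ϱ₋(p₋ − p₊) + (2c_v+1)ϱ₁(ϱ₋p₊ − ϱ₊p₋)`. -/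
def Xu (cv ϱm ϱp pm pp ϱ1 : ℝ) : ℝ :=
  ϱp * ϱm * (pm - pp) + (2 * cv + 1) * ϱ1 * (ϱm * pp - ϱp * pm)

/-- `Z = p₊ + ((ϱ₁−ϱ₊)ϱ₊/ϱ₁)(v₊ − μ₁)²`, with `v₊ = v₋ − u`. -/
def Zu (ϱm ϱp pm pp ϱ1 vm u : ℝ) : ℝ :=
  pp + ((ϱ1 - ϱp) * ϱp / ϱ1) * ((vm - u) - mu1u ϱm ϱp pm pp ϱ1 vm u) ^ 2

/-- The middle pressure `p₁ = (YZ − X)/(Y + ϱ₁R)` with `R = ϱ₋ − ϱ₊`. -/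
def p1u (cv ϱm ϱp pm pp ϱ1 vm u : ℝ) : ℝ :=
  (Yu ϱm ϱp pm pp ϱ1 vm u * Zu ϱm ϱp pm pp ϱ1 vm u - Xu cv ϱm ϱp pm pp ϱ1) /
    (Yu ϱm ϱp pm pp ϱ1 vm u + ϱ1 * (ϱm - ϱp))

/-- The subsolution parameter `ε₁ = (ϱ₁RZ + X)/(ϱ₁(Y + ϱ₁R))` with `R = ϱ₋ − ϱ₊`. -/
def eps1u (cv ϱm ϱp pm pp ϱ1 vm u : ℝ) : ℝ :=
  (ϱ1 * (ϱm - ϱp) * Zu ϱm ϱp pm pp ϱ1 vm u + Xu cv ϱm ϱp pm pp ϱ1) /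
    (ϱ1 * (Yu ϱm ϱp pm pp ϱ1 vm u + ϱ1 * (ϱm - ϱp)))

/-- The second component `β = (ϱ₊v₊ + μ₁(ϱ₁−ϱ₊))/ϱ₁` of the middle velocity,
with `v₊ = v₋ − u`. -/
def betau (ϱm ϱp pm pp ϱ1 vm u : ℝ) : ℝ :=
  (ϱp * (vm - u) + mu1u ϱm ϱp pm pp ϱ1 vm u * (ϱ1 - ϱp)) / ϱ1

/-- The subsolution parameter `ε₂`. -/
def eps2u (cv ϱm ϱp pm pp ϱ1 vm u : ℝ) : ℝ :=
  (1 / (ϱ1 * ϱp)) *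
      ((ϱ1 - ϱp) * (p1u cv ϱm ϱp pm pp ϱ1 vm u + pp) +
        2 * cv * (ϱ1 * pp - ϱp * p1u cv ϱm ϱp pm pp ϱ1 vm u)) +
    eps1u cv ϱm ϱp pm pp ϱ1 vm u *
      (((vm - u) + betau ϱm ϱp pm pp ϱ1 vm u) /
          ((vm - u) - betau ϱm ϱp pm pp ϱ1 vm u) * ((ϱ1 - ϱp) / ϱp) - 1)

open Filter Topology

private lemma mu0_den_eq (ϱm ϱp pm pp ϱ1 vm u : ℝ) (h : ϱp - ϱm ≠ 0) :
    vm - mu0u ϱm ϱp pm pp ϱ1 vm u =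
      (ϱp * u - Real.sqrt (Bu ϱm ϱp pm pp u * ((ϱ1 - ϱp) / (ϱ1 - ϱm)))) / (ϱp - ϱm) := by
  have h' : ϱm - ϱp ≠ 0 := by intro hc; apply h; linarith [sub_eq_zero.1 hc]
  unfold mu0u
  field_simp
  ring

private lemma mu0_num_eq (ϱm ϱp pm pp ϱ1 vm u : ℝ) (h : ϱp - ϱm ≠ 0) :
    vm + mu0u ϱm ϱp pm pp ϱ1 vm u =
      2 * vm - (ϱp * u - Real.sqrt (Bu ϱm ϱp pm pp u * ((ϱ1 - ϱp) / (ϱ1 - ϱm)))) / (ϱp - ϱm) := by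
  have h' : ϱm - ϱp ≠ 0 := by intro hc; apply h; linarith [sub_eq_zero.1 hc]
  unfold mu0u
  field_simp
  ring

private lemma mu1_den_eq (ϱm ϱp pm pp ϱ1 vm u : ℝ) (h : ϱp - ϱm ≠ 0) :
    mu1u ϱm ϱp pm pp ϱ1 vm u - (vm - u) =
      (Real.sqrt (Bu ϱm ϱp pm pp u * ((ϱ1 - ϱm) / (ϱ1 - ϱp))) - ϱm * u) / (ϱp - ϱm) := by
  have h' : ϱm - ϱp ≠ 0 := by intro hc; apply h; linarith [sub_eq_zero.1 hc]
  unfold mu1u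
  field_simp
  ring

private lemma mu1_num_eq (ϱm ϱp pm pp ϱ1 vm u : ℝ) (h : ϱp - ϱm ≠ 0) :
    mu1u ϱm ϱp pm pp ϱ1 vm u + (vm - u) =
      2 * (vm - u) +
        (Real.sqrt (Bu ϱm ϱp pm pp u * ((ϱ1 - ϱm) / (ϱ1 - ϱp))) - ϱm * u) / (ϱp - ϱm) := by
  have h' : ϱm - ϱp ≠ 0 := by intro hc; apply h; linarith [sub_eq_zero.1 hc]
  unfold mu1u
  field_simp
  ring


/-- **Lemma (sign and limit of `Y`, case `ϱ₋ < ϱ₊`).** For `u = v₋ − v₊`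
sufficiently large (with `v₋` fixed), `Y` is well defined and satisfies `Y < 0`
and `Y + ϱ₁R < 0`; moreover `Y` converges as `u → ∞` to
`ϱ₁R(1 + 2/(√(ϱ₊(ϱ₁−ϱ₋)/(ϱ₋(ϱ₁−ϱ₊))) − 1))`. -/
theorem Y_negative_large_u
    (ϱm ϱp pm pp ϱ1 vm : ℝ)
    (hϱm : 0 < ϱm) (hϱmp : ϱm < ϱp) (hpm : 0 < pm) (hpp : 0 < pp)
    (hϱ1 : ϱp < ϱ1) :
    (∃ u0 : ℝ, 0 < u0 ∧ ∀ u : ℝ, u0 ≤ u →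
      vm - mu0u ϱm ϱp pm pp ϱ1 vm u ≠ 0 ∧
      mu1u ϱm ϱp pm pp ϱ1 vm u - (vm - u) ≠ 0 ∧
      Yu ϱm ϱp pm pp ϱ1 vm u < 0 ∧
      Yu ϱm ϱp pm pp ϱ1 vm u + ϱ1 * (ϱm - ϱp) < 0) ∧
    Tendsto (fun u => Yu ϱm ϱp pm pp ϱ1 vm u) atTop
      (𝓝 (ϱ1 * (ϱm - ϱp) *
        (1 + 2 / (Real.sqrt (ϱp * (ϱ1 - ϱm) / (ϱm * (ϱ1 - ϱp))) - 1)))) := by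
  -- basic positivity facts
  have hϱp : 0 < ϱp := hϱm.trans hϱmp
  have hϱ1pos : 0 < ϱ1 := hϱp.trans hϱ1
  have h1m : (0:ℝ) < ϱ1 - ϱm := by linarith
  have h1p : (0:ℝ) < ϱ1 - ϱp := by linarith
  have hq : (0:ℝ) < ϱp - ϱm := by linarith
  have hqne : ϱp - ϱm ≠ 0 := ne_of_gt hq
  have ha0 : (0:ℝ) < (ϱ1 - ϱp) / (ϱ1 - ϱm) := div_pos h1p h1m
  have ha1 : (0:ℝ) < (ϱ1 - ϱm) / (ϱ1 - ϱp) := div_pos h1m h1p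
  set K : ℝ := Real.sqrt (ϱp * (ϱ1 - ϱm) / (ϱm * (ϱ1 - ϱp))) with hKdef
  have hK1 : 1 < K := by
    rw [hKdef, show (1:ℝ) = Real.sqrt 1 from Real.sqrt_one.symm]
    apply Real.sqrt_lt_sqrt (by norm_num)
    rw [lt_div_iff₀ (by positivity)]
    nlinarith
  have hsqa1 : Real.sqrt (ϱm * ϱp * ((ϱ1 - ϱm) / (ϱ1 - ϱp))) = ϱm * K := by
    have hKnn : (0:ℝ) ≤ ϱm * K := by positivity
    have h : ϱm * ϱp * ((ϱ1 - ϱm) / (ϱ1 - ϱp)) = (ϱm * K) ^ 2 := by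
      rw [mul_pow, hKdef, Real.sq_sqrt (by positivity)]
      field_simp
    rw [h, Real.sqrt_sq hKnn]
  set d0 : ℝ := ϱp - Real.sqrt (ϱm * ϱp * ((ϱ1 - ϱp) / (ϱ1 - ϱm))) with hd0def
  set d1 : ℝ := Real.sqrt (ϱm * ϱp * ((ϱ1 - ϱm) / (ϱ1 - ϱp))) - ϱm with hd1def
  have hd0 : 0 < d0 := by
    have hlt : Real.sqrt (ϱm * ϱp * ((ϱ1 - ϱp) / (ϱ1 - ϱm))) < ϱp := by
      rw [Real.sqrt_lt' hϱp]
      have hlt1 : (ϱ1 - ϱp) / (ϱ1 - ϱm) < 1 := (div_lt_one h1m).2 (by linarith)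
      have hmul : ϱm * ϱp * ((ϱ1 - ϱp) / (ϱ1 - ϱm)) < ϱm * ϱp * 1 :=
        mul_lt_mul_of_pos_left hlt1 (by positivity)
      nlinarith [hmul]
    rw [hd0def]; linarith
  have hd1 : 0 < d1 := by
    rw [hd1def, hsqa1]; nlinarith
  -- the limit of `Bu * a / u ^ 2`
  have hEC : ∀ a : ℝ, 0 < a →
      Tendsto (fun u => Bu ϱm ϱp pm pp u * a / u ^ 2) atTop (𝓝 (ϱm * ϱp * a)) := by
    intro a ha
    have h1 : Tendsto (fun u : ℝ => ϱm * ϱp * a - (ϱp - ϱm) * (pp - pm) * a / u ^ 2)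
        atTop (𝓝 (ϱm * ϱp * a - 0)) :=
      tendsto_const_nhds.sub (tendsto_const_nhds.div_atTop (tendsto_pow_atTop two_ne_zero))
    rw [sub_zero] at h1
    refine h1.congr' ?_
    filter_upwards [eventually_gt_atTop (0:ℝ)] with u hu
    have hu2 : u ^ 2 ≠ 0 := by positivity
    unfold Bu
    field_simp
  -- `Bu` tends to infinity, hence is eventually positive
  have hEtop : Tendsto (fun u => Bu ϱm ϱp pm pp u) atTop atTop := by
    have h1 : Tendsto (fun u : ℝ => ϱm * ϱp * u ^ 2) atTop atTop :=
      (tendsto_pow_atTop two_ne_zero).const_mul_atTop (by positivity)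
    have h2 := tendsto_atTop_add_const_right atTop (-((ϱp - ϱm) * (pp - pm))) h1
    refine h2.congr fun u => ?_
    unfold Bu; ring
  have hEpos : ∀ᶠ u in atTop, 0 < Bu ϱm ϱp pm pp u := hEtop.eventually_gt_atTop 0
  -- limits of `D0 u / u` and `D1 u / u`
  have hD0u : Tendsto
      (fun u => (ϱp * u - Real.sqrt (Bu ϱm ϱp pm pp u * ((ϱ1 - ϱp) / (ϱ1 - ϱm)))) / u)
      atTop (𝓝 d0) := by
    have hS0 : Tendsto (fun u => Real.sqrt (Bu ϱm ϱp pm pp u * ((ϱ1 - ϱp) / (ϱ1 - ϱm)) / u ^ 2))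
        atTop (𝓝 (Real.sqrt (ϱm * ϱp * ((ϱ1 - ϱp) / (ϱ1 - ϱm))))) :=
      (Real.continuous_sqrt.tendsto _).comp (hEC _ ha0)
    have h1 : Tendsto
        (fun u => ϱp - Real.sqrt (Bu ϱm ϱp pm pp u * ((ϱ1 - ϱp) / (ϱ1 - ϱm)) / u ^ 2))
        atTop (𝓝 d0) := tendsto_const_nhds.sub hS0
    refine h1.congr' ?_
    filter_upwards [eventually_gt_atTop (0:ℝ), hEpos] with u hu hE
    have hnn : (0:ℝ) ≤ Bu ϱm ϱp pm pp u * ((ϱ1 - ϱp) / (ϱ1 - ϱm)) := by positivity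
    rw [Real.sqrt_div hnn, Real.sqrt_sq hu.le]
    generalize Real.sqrt (Bu ϱm ϱp pm pp u * ((ϱ1 - ϱp) / (ϱ1 - ϱm))) = S
    field_simp
  have hD1u : Tendsto
      (fun u => (Real.sqrt (Bu ϱm ϱp pm pp u * ((ϱ1 - ϱm) / (ϱ1 - ϱp))) - ϱm * u) / u)
      atTop (𝓝 d1) := by
    have hS1 : Tendsto (fun u => Real.sqrt (Bu ϱm ϱp pm pp u * ((ϱ1 - ϱm) / (ϱ1 - ϱp)) / u ^ 2))
        atTop (𝓝 (Real.sqrt (ϱm * ϱp * ((ϱ1 - ϱm) / (ϱ1 - ϱp))))) :=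
      (Real.continuous_sqrt.tendsto _).comp (hEC _ ha1)
    have h1 : Tendsto
        (fun u => Real.sqrt (Bu ϱm ϱp pm pp u * ((ϱ1 - ϱm) / (ϱ1 - ϱp)) / u ^ 2) - ϱm)
        atTop (𝓝 d1) := hS1.sub tendsto_const_nhds
    refine h1.congr' ?_
    filter_upwards [eventually_gt_atTop (0:ℝ), hEpos] with u hu hE
    have hnn : (0:ℝ) ≤ Bu ϱm ϱp pm pp u * ((ϱ1 - ϱm) / (ϱ1 - ϱp)) := by positivity
    rw [Real.sqrt_div hnn, Real.sqrt_sq hu.le]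
    generalize Real.sqrt (Bu ϱm ϱp pm pp u * ((ϱ1 - ϱm) / (ϱ1 - ϱp))) = S
    field_simp
  -- eventual positivity of `D0` and `D1`
  have hD0pos : ∀ᶠ u in atTop,
      0 < ϱp * u - Real.sqrt (Bu ϱm ϱp pm pp u * ((ϱ1 - ϱp) / (ϱ1 - ϱm))) := by
    filter_upwards [eventually_gt_atTop (0:ℝ), hD0u.eventually (lt_mem_nhds hd0)] with u hu h
    have := (div_pos_iff.1 h)
    rcases this with ⟨h1, _⟩ | ⟨_, h2⟩
    · exact h1
    · linarith
  have hD1pos : ∀ᶠ u in atTop,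
      0 < Real.sqrt (Bu ϱm ϱp pm pp u * ((ϱ1 - ϱm) / (ϱ1 - ϱp))) - ϱm * u := by
    filter_upwards [eventually_gt_atTop (0:ℝ), hD1u.eventually (lt_mem_nhds hd1)] with u hu h
    rcases div_pos_iff.1 h with ⟨h1, _⟩ | ⟨_, h2⟩
    · exact h1
    · linarith
  -- `D0` tends to infinity
  have hD0top : Tendsto
      (fun u => ϱp * u - Real.sqrt (Bu ϱm ϱp pm pp u * ((ϱ1 - ϱp) / (ϱ1 - ϱm))))
      atTop atTop := Tendsto.num tendsto_id hd0 hD0u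
  -- limit of `(vm - u) / D1 u`
  have hratio : Tendsto
      (fun u => (vm - u) /
        (Real.sqrt (Bu ϱm ϱp pm pp u * ((ϱ1 - ϱm) / (ϱ1 - ϱp))) - ϱm * u))
      atTop (𝓝 ((-1) / d1)) := by
    have hnum : Tendsto (fun u : ℝ => vm / u - 1) atTop (𝓝 (0 - 1)) :=
      (tendsto_const_nhds.div_atTop tendsto_id).sub tendsto_const_nhds
    have h1 : Tendsto (fun u => (vm / u - 1) /
        ((Real.sqrt (Bu ϱm ϱp pm pp u * ((ϱ1 - ϱm) / (ϱ1 - ϱp))) - ϱm * u) / u))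
        atTop (𝓝 ((0 - 1) / d1)) := hnum.div hD1u (ne_of_gt hd1)
    rw [show ((0:ℝ) - 1) / d1 = -1 / d1 by ring] at h1
    refine h1.congr' ?_
    filter_upwards [eventually_gt_atTop (0:ℝ), hD1pos] with u hu hD
    beta_reduce
    generalize Real.sqrt (Bu ϱm ϱp pm pp u * ((ϱ1 - ϱm) / (ϱ1 - ϱp))) = S at hD ⊢
    have hune : u ≠ 0 := ne_of_gt hu
    have hDne : S - ϱm * u ≠ 0 := ne_of_gt hD
    field_simp
  -- the limit of `Yu`
  have hYlim : Tendsto (fun u => Yu ϱm ϱp pm pp ϱ1 vm u) atTop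
      (𝓝 (ϱ1 * ϱp * (0 - 1) + ϱ1 * ϱm * (1 + 2 * (ϱp - ϱm) * ((-1) / d1)))) := by
    have hT1 : Tendsto
        (fun u => 2 * vm * (ϱp - ϱm) /
          (ϱp * u - Real.sqrt (Bu ϱm ϱp pm pp u * ((ϱ1 - ϱp) / (ϱ1 - ϱm)))) - 1)
        atTop (𝓝 (0 - 1)) :=
      (tendsto_const_nhds.div_atTop hD0top).sub tendsto_const_nhds
    have hT2 : Tendsto
        (fun u => 1 + 2 * (ϱp - ϱm) * ((vm - u) /
          (Real.sqrt (Bu ϱm ϱp pm pp u * ((ϱ1 - ϱm) / (ϱ1 - ϱp))) - ϱm * u)))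
        atTop (𝓝 (1 + 2 * (ϱp - ϱm) * ((-1) / d1))) :=
      tendsto_const_nhds.add (tendsto_const_nhds.mul hratio)
    have hF : Tendsto
        (fun u => ϱ1 * ϱp * (2 * vm * (ϱp - ϱm) /
            (ϱp * u - Real.sqrt (Bu ϱm ϱp pm pp u * ((ϱ1 - ϱp) / (ϱ1 - ϱm)))) - 1) +
          ϱ1 * ϱm * (1 + 2 * (ϱp - ϱm) * ((vm - u) /
            (Real.sqrt (Bu ϱm ϱp pm pp u * ((ϱ1 - ϱm) / (ϱ1 - ϱp))) - ϱm * u))))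
        atTop (𝓝 (ϱ1 * ϱp * (0 - 1) + ϱ1 * ϱm * (1 + 2 * (ϱp - ϱm) * ((-1) / d1)))) :=
      (hT1.const_mul _).add (hT2.const_mul _)
    refine hF.congr' ?_
    filter_upwards [hD0pos, hD1pos] with u hD0 hD1
    have hD0ne : ϱp * u - Real.sqrt (Bu ϱm ϱp pm pp u * ((ϱ1 - ϱp) / (ϱ1 - ϱm))) ≠ 0 :=
      ne_of_gt hD0
    have hD1ne : Real.sqrt (Bu ϱm ϱp pm pp u * ((ϱ1 - ϱm) / (ϱ1 - ϱp))) - ϱm * u ≠ 0 :=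
      ne_of_gt hD1
    have e0 : (vm + mu0u ϱm ϱp pm pp ϱ1 vm u) / (vm - mu0u ϱm ϱp pm pp ϱ1 vm u) =
        2 * vm * (ϱp - ϱm) /
          (ϱp * u - Real.sqrt (Bu ϱm ϱp pm pp u * ((ϱ1 - ϱp) / (ϱ1 - ϱm)))) - 1 := by
      rw [mu0_num_eq ϱm ϱp pm pp ϱ1 vm u hqne, mu0_den_eq ϱm ϱp pm pp ϱ1 vm u hqne]
      generalize Real.sqrt (Bu ϱm ϱp pm pp u * ((ϱ1 - ϱp) / (ϱ1 - ϱm))) = S at hD0ne ⊢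
      field_simp [hD0ne, hqne]
    have e1 : (mu1u ϱm ϱp pm pp ϱ1 vm u + (vm - u)) / (mu1u ϱm ϱp pm pp ϱ1 vm u - (vm - u)) =
        1 + 2 * (ϱp - ϱm) * ((vm - u) /
          (Real.sqrt (Bu ϱm ϱp pm pp u * ((ϱ1 - ϱm) / (ϱ1 - ϱp))) - ϱm * u)) := by
      rw [mu1_num_eq ϱm ϱp pm pp ϱ1 vm u hqne, mu1_den_eq ϱm ϱp pm pp ϱ1 vm u hqne]
      generalize Real.sqrt (Bu ϱm ϱp pm pp u * ((ϱ1 - ϱm) / (ϱ1 - ϱp))) = S at hD1ne ⊢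
      have hx : (S - ϱm * u)⁻¹ * (S - ϱm * u) = 1 := inv_mul_cancel₀ hD1ne
      field_simp [hD1ne, hqne]
      linear_combination hx
    unfold Yu
    rw [e0, e1]
  -- identify the limit value
  have hLeq : ϱ1 * ϱp * (0 - 1) + ϱ1 * ϱm * (1 + 2 * (ϱp - ϱm) * ((-1) / d1)) =
      ϱ1 * (ϱm - ϱp) * (1 + 2 / (K - 1)) := by
    have hd1' : d1 = ϱm * (K - 1) := by rw [hd1def, hsqa1]; ring
    have hK1ne : K - 1 ≠ 0 := ne_of_gt (by linarith)
    rw [hd1']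
    field_simp [hK1ne, ne_of_gt hϱm]
    ring
  have hYlim' : Tendsto (fun u => Yu ϱm ϱp pm pp ϱ1 vm u) atTop
      (𝓝 (ϱ1 * (ϱm - ϱp) * (1 + 2 / (K - 1)))) := by
    rw [← hLeq]; exact hYlim
  -- the limit is negative, and remains so after adding `ϱ1 * (ϱm - ϱp)`
  have h2K : 0 < 2 / (K - 1) := div_pos two_pos (by linarith)
  have hLneg : ϱ1 * (ϱm - ϱp) * (1 + 2 / (K - 1)) < 0 := by
    apply mul_neg_of_neg_of_pos
    · nlinarith
    · linarith
  have hLneg2 : ϱ1 * (ϱm - ϱp) * (1 + 2 / (K - 1)) < -(ϱ1 * (ϱm - ϱp)) := by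
    nlinarith
  constructor
  · -- existence of `u0`
    have hev : ∀ᶠ u in atTop,
        vm - mu0u ϱm ϱp pm pp ϱ1 vm u ≠ 0 ∧
        mu1u ϱm ϱp pm pp ϱ1 vm u - (vm - u) ≠ 0 ∧
        Yu ϱm ϱp pm pp ϱ1 vm u < 0 ∧
        Yu ϱm ϱp pm pp ϱ1 vm u + ϱ1 * (ϱm - ϱp) < 0 := by
      filter_upwards [hD0pos, hD1pos,
        hYlim'.eventually (gt_mem_nhds hLneg),
        hYlim'.eventually (gt_mem_nhds hLneg2)] with u hD0 hD1 hY1 hY2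
      refine ⟨?_, ?_, hY1, by linarith⟩
      · rw [mu0_den_eq ϱm ϱp pm pp ϱ1 vm u hqne]
        exact ne_of_gt (div_pos hD0 hq)
      · rw [mu1_den_eq ϱm ϱp pm pp ϱ1 vm u hqne]
        exact ne_of_gt (div_pos hD1 hq)
    obtain ⟨N, hN⟩ := eventually_atTop.1 hev
    refine ⟨max N 1, lt_of_lt_of_le one_pos (le_max_right _ _), fun u hu => ?_⟩
    exact hN u (le_trans (le_max_left _ _) hu)
  · exact hYlim'
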